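/- Let c > 0 be real and ε ∈ ℂ with |ε| = 1. On the slit punctured disc Ω define φ(w) := (1 − |w|^{2c})/|1 − w^c|², φ'(w) := (1 − |w|^{2c})/|1 − ε·w^c|², and g(w) := ε·(1 − ε̄·w̄^c)(1 − w^c)/((1 − ε·w^c)(1 − w̄^c)), where w̄^c denotes the complex conjugate of w^c (all denominators are nonzero since |w^c| < 1). Then |g| = 1 everywhere on Ω, and the gauge-equivalence relations ∂_w log φ' = g·∂_w log φ and ∂_{w̄} log φ' = ∂_{w̄} log φ − (∂_{w̄} g)/g hold on Ω. -/

import Mathlib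

open Complex ComplexConjugate

noncomputable section

/-- Wirtinger derivative ∂_z f = (1/2)(∂_t f − i ∂_r f). -/
def wdz (f : ℂ → ℂ) (z : ℂ) : ℂ :=
  (2:ℂ)⁻¹ * (fderiv ℝ f z 1 - Complex.I * fderiv ℝ f z Complex.I)

/-- Wirtinger derivative ∂_z̄ f = (1/2)(∂_t f + i ∂_r f). -/
def wdzbar (f : ℂ → ℂ) (z : ℂ) : ℂ :=
  (2:ℂ)⁻¹ * (fderiv ℝ f z 1 + Complex.I * fderiv ℝ f z Complex.I)

/-- A real-valued function regarded as complex-valued. -/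
def cre (φ : ℂ → ℝ) : ℂ → ℂ := fun z => (φ z : ℂ)

/-- ∂_z log φ := (∂_z φ)/φ for positive real φ. -/
def dzlog (φ : ℂ → ℝ) (z : ℂ) : ℂ := wdz (cre φ) z / (φ z : ℂ)

/-- ∂_z̄ log φ := (∂_z̄ φ)/φ for positive real φ. -/
def dzbarlog (φ : ℂ → ℝ) (z : ℂ) : ℂ := wdzbar (cre φ) z / (φ z : ℂ)

/-- Flat Laplacian ∂_t² + ∂_r² on ℂ ≅ ℝ², where z = t + ir. -/
def lap2 (φ : ℂ → ℝ) (z : ℂ) : ℝ :=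
  fderiv ℝ (fun w => fderiv ℝ φ w 1) z 1 +
  fderiv ℝ (fun w => fderiv ℝ φ w Complex.I) z Complex.I

/-- The slit punctured disc: the open unit disc minus the origin and the nonnegative
real axis. -/
def Omega : Set ℂ :=
  {w : ℂ | 0 < ‖w‖ ∧ ‖w‖ < 1 ∧ ¬(w.im = 0 ∧ 0 ≤ w.re)}

/-- The argument normalized to lie in (0, 2π) (on Ω). -/
def argTwoPi (w : ℂ) : ℝ := if 0 < w.arg then w.arg else w.arg + 2 * Real.pi

/-- The branch of the complex logarithm on Ω with argument in (0, 2π). -/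
def Lbr (w : ℂ) : ℂ := (Real.log (‖w‖) : ℂ) + (argTwoPi w : ℂ) * Complex.I

/-- w^c := exp(c·L(w)) for the branch L with argument in (0, 2π). -/
def wpow (c : ℝ) (w : ℂ) : ℂ := Complex.exp ((c : ℂ) * Lbr w)

/-- The super-potential φ_c(w) = (1 − |w|^{2c})/|1 − w^c|². -/
def phiC (c : ℝ) (w : ℂ) : ℝ :=
  (1 - ‖w‖ ^ (2*c)) / Complex.normSq (1 - wpow c w)
/-- The super-potential φ' obtained from φ_c after continuing once around the origin. -/
def phiC' (c : ℝ) (ε : ℂ) (w : ℂ) : ℝ :=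
  (1 - ‖w‖ ^ (2*c)) / Complex.normSq (1 - ε * wpow c w)

/-- The gauge transformation g = ε(1 − ε̄w̄^c)(1 − w^c)/((1 − εw^c)(1 − w̄^c)). -/
def gauge17 (c : ℝ) (ε : ℂ) (w : ℂ) : ℂ :=
  ε * (1 - conj ε * conj (wpow c w)) * (1 - wpow c w) /
    ((1 - ε * wpow c w) * (1 - conj (wpow c w)))


/-! ### Wirtinger calculus -/

section rules
variable {f g q : ℂ → ℂ} {w : ℂ}

lemma wdz_congr (h : f =ᶠ[nhds w] g) : wdz f w = wdz g w := by
  unfold wdz; rw [Filter.EventuallyEq.fderiv_eq h]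

lemma wdzbar_congr (h : f =ᶠ[nhds w] g) : wdzbar f w = wdzbar g w := by
  unfold wdzbar; rw [Filter.EventuallyEq.fderiv_eq h]

lemma fderiv_apply_holo (hf : DifferentiableAt ℂ f w) (v : ℂ) :
    fderiv ℝ f w v = v * deriv f w := by
  rw [(hf.hasFDerivAt.restrictScalars ℝ).fderiv]
  have h := (fderiv ℂ f w).map_smul v (1:ℂ)
  simp only [smul_eq_mul, mul_one] at h
  simp [ContinuousLinearMap.coe_restrictScalars', h, fderiv_apply_one_eq_deriv]

lemma wdz_holo (hf : DifferentiableAt ℂ f w) : wdz f w = deriv f w := by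
  simp only [wdz, fderiv_apply_holo hf]; ring_nf
  rw [Complex.I_sq]; ring

lemma wdzbar_holo (hf : DifferentiableAt ℂ f w) : wdzbar f w = 0 := by
  simp only [wdzbar, fderiv_apply_holo hf]; ring_nf
  rw [Complex.I_sq]; ring

lemma fderiv_conj_apply (hf : DifferentiableAt ℝ f w) (v : ℂ) :
    fderiv ℝ (fun z => conj (f z)) w v = conj (fderiv ℝ f w v) := by
  have : (fun z => conj (f z)) = (Complex.conjCLE : ℂ → ℂ) ∘ f := rfl
  rw [this, fderiv_comp w Complex.conjCLE.differentiableAt hf]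
  rw [ContinuousLinearMap.comp_apply, Complex.conjCLE.fderiv]; rfl

lemma wdz_conj (hf : DifferentiableAt ℝ f w) :
    wdz (fun z => conj (f z)) w = conj (wdzbar f w) := by
  simp only [wdz, wdzbar, fderiv_conj_apply hf, map_mul, map_add]
  simp [Complex.conj_I, map_ofNat]; ring

lemma wdzbar_conj (hf : DifferentiableAt ℝ f w) :
    wdzbar (fun z => conj (f z)) w = conj (wdz f w) := by
  simp only [wdz, wdzbar, fderiv_conj_apply hf, map_mul, map_sub]
  simp [Complex.conj_I, map_ofNat]

lemma wdz_const (k : ℂ) : wdz (fun _ => k) w = 0 := by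
  simp [wdz]

lemma wdzbar_const (k : ℂ) : wdzbar (fun _ => k) w = 0 := by
  simp [wdzbar]

lemma wdz_const_sub (hf : DifferentiableAt ℝ f w) (k : ℂ) :
    wdz (fun z => k - f z) w = - wdz f w := by
  simp only [wdz, fderiv_const_sub k, ContinuousLinearMap.neg_apply]; ring

lemma wdzbar_const_sub (hf : DifferentiableAt ℝ f w) (k : ℂ) :
    wdzbar (fun z => k - f z) w = - wdzbar f w := by
  simp only [wdzbar, fderiv_const_sub k, ContinuousLinearMap.neg_apply]; ring

lemma wdz_mul (hf : DifferentiableAt ℝ f w) (hg : DifferentiableAt ℝ g w) :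
    wdz (fun z => f z * g z) w = f w * wdz g w + g w * wdz f w := by
  simp only [wdz, fderiv_fun_mul hf hg, ContinuousLinearMap.add_apply,
    ContinuousLinearMap.smul_apply, smul_eq_mul]; ring

lemma wdzbar_mul (hf : DifferentiableAt ℝ f w) (hg : DifferentiableAt ℝ g w) :
    wdzbar (fun z => f z * g z) w = f w * wdzbar g w + g w * wdzbar f w := by
  simp only [wdzbar, fderiv_fun_mul hf hg, ContinuousLinearMap.add_apply,
    ContinuousLinearMap.smul_apply, smul_eq_mul]; ring

lemma wdz_comp_holo (hh : DifferentiableAt ℂ g (q w)) (hq : DifferentiableAt ℝ q w) :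
    wdz (fun z => g (q z)) w = deriv g (q w) * wdz q w := by
  have hcomp : fderiv ℝ (fun z => g (q z)) w =
      (fderiv ℝ g (q w)).comp (fderiv ℝ q w) :=
    fderiv_comp w (hh.restrictScalars ℝ) hq
  simp only [wdz, hcomp, ContinuousLinearMap.comp_apply, fderiv_apply_holo hh]; ring

lemma wdzbar_comp_holo (hh : DifferentiableAt ℂ g (q w)) (hq : DifferentiableAt ℝ q w) :
    wdzbar (fun z => g (q z)) w = deriv g (q w) * wdzbar q w := by
  have hcomp : fderiv ℝ (fun z => g (q z)) w =
      (fderiv ℝ g (q w)).comp (fderiv ℝ q w) :=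
    fderiv_comp w (hh.restrictScalars ℝ) hq
  simp only [wdzbar, hcomp, ContinuousLinearMap.comp_apply, fderiv_apply_holo hh]; ring

lemma wdz_inv (hq : DifferentiableAt ℝ q w) (h0 : q w ≠ 0) :
    wdz (fun z => (q z)⁻¹) w = -((q w)^2)⁻¹ * wdz q w := by
  rw [wdz_comp_holo (differentiableAt_inv h0) hq, deriv_inv]

lemma wdzbar_inv (hq : DifferentiableAt ℝ q w) (h0 : q w ≠ 0) :
    wdzbar (fun z => (q z)⁻¹) w = -((q w)^2)⁻¹ * wdzbar q w := by
  rw [wdzbar_comp_holo (differentiableAt_inv h0) hq, deriv_inv]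

end rules

/-! ### The branch and its properties -/

lemma isOpen_Omega : IsOpen Omega := by
  have h1 : IsOpen {w : ℂ | 0 < ‖w‖} := isOpen_lt continuous_const continuous_norm
  have h2 : IsOpen {w : ℂ | ‖w‖ < 1} := isOpen_lt continuous_norm continuous_const
  have h3 : IsClosed {w : ℂ | w.im = 0 ∧ 0 ≤ w.re} :=
    (isClosed_eq Complex.continuous_im continuous_const).inter
      (isClosed_le continuous_const Complex.continuous_re)
  have he : Omega = ({w : ℂ | 0 < ‖w‖} ∩ {w : ℂ | ‖w‖ < 1}) ∩
      {w : ℂ | w.im = 0 ∧ 0 ≤ w.re}ᶜ := by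
    ext z; simp only [Omega, Set.mem_setOf_eq, Set.mem_inter_iff, Set.mem_compl_iff]; tauto
  rw [he]; exact (h1.inter h2).inter h3.isOpen_compl

lemma Lbr_eq {w : ℂ} (hw : w ∈ Omega) : Lbr w = Complex.log (-w) + Real.pi * Complex.I := by
  obtain ⟨h0, -, hax⟩ := hw
  have hw0 : w ≠ 0 := by
    intro h; rw [h] at h0; simp at h0
  have habs : ‖-w‖ = ‖w‖ := by simp
  have harg : argTwoPi w = Complex.arg (-w) + Real.pi := by
    rcases lt_trichotomy w.im 0 with him | him | him
    · have h1 : Complex.arg w < 0 := Complex.arg_neg_iff.mpr him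
      have h2 : Complex.arg (-w) = Complex.arg w + Real.pi :=
        Complex.arg_neg_eq_arg_add_pi_of_im_neg him
      rw [argTwoPi, if_neg (by linarith), h2]; ring
    · have hre : w.re < 0 := by
        rcases lt_trichotomy w.re 0 with h|h|h
        · exact h
        · exact absurd ⟨him, le_of_eq h.symm⟩ hax
        · exact absurd ⟨him, le_of_lt h⟩ hax
      have h1 : Complex.arg w = Real.pi := Complex.arg_eq_pi_iff.mpr ⟨hre, him⟩
      have h2 : Complex.arg (-w) = 0 := Complex.arg_eq_zero_iff.mpr
        ⟨by simp [Complex.neg_re]; linarith, by simp [him]⟩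
      rw [argTwoPi, if_pos (by rw [h1]; exact Real.pi_pos), h1, h2, zero_add]
    · have h1 : 0 < Complex.arg w := by
        rcases (Complex.arg_nonneg_iff.mpr (le_of_lt him)).lt_or_eq with h|h
        · exact h
        · exact absurd (Complex.arg_eq_zero_iff.mp h.symm).2 (by linarith)
      have h2 : Complex.arg (-w) = Complex.arg w - Real.pi :=
        Complex.arg_neg_eq_arg_sub_pi_of_im_pos him
      rw [argTwoPi, if_pos h1, h2]; ring
  rw [Lbr, Complex.log, habs, harg]
  push_cast
  ring

lemma neg_mem_slitPlane {w : ℂ} (hw : w ∈ Omega) : -w ∈ Complex.slitPlane := by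
  obtain ⟨h0, -, hax⟩ := hw
  rw [Complex.mem_slitPlane_iff]
  by_cases him : w.im = 0
  · left
    simp only [Complex.neg_re, neg_pos]
    rcases lt_trichotomy w.re 0 with h|h|h
    · exact h
    · exfalso; apply h0.ne'; rw [show w = 0 from Complex.ext (by simp [h]) (by simp [him])]; simp
    · exact absurd ⟨him, le_of_lt h⟩ hax
  · right; simpa using him

lemma wpow_eventually_eq {c : ℝ} {w : ℂ} (hw : w ∈ Omega) :
    wpow c =ᶠ[nhds w] fun z => Complex.exp ((c:ℂ) * (Complex.log (-z) + Real.pi * Complex.I)) := by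
  filter_upwards [isOpen_Omega.mem_nhds hw] with z hz
  rw [wpow, Lbr_eq hz]

lemma differentiableAt_wpow {c : ℝ} {w : ℂ} (hw : w ∈ Omega) :
    DifferentiableAt ℂ (wpow c) w := by
  have hd : DifferentiableAt ℂ
      (fun z => Complex.exp ((c:ℂ) * (Complex.log (-z) + Real.pi * Complex.I))) w := by
    apply DifferentiableAt.cexp
    apply DifferentiableAt.const_mul
    apply DifferentiableAt.add_const
    exact (differentiableAt_neg_iff.mpr differentiableAt_id).clog (neg_mem_slitPlane hw)
  exact hd.congr_of_eventuallyEq (wpow_eventually_eq hw)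

lemma abs_wpow {c : ℝ} {w : ℂ} (hw : w ≠ 0) :
    ‖wpow c w‖ = ‖w‖ ^ c := by
  rw [wpow, Complex.norm_exp]
  have : ((c:ℂ) * Lbr w).re = c * Real.log (‖w‖) := by
    simp [Lbr, Complex.mul_re]
  rw [this, mul_comm, Real.exp_mul, Real.exp_log (norm_pos_iff.mpr hw)]

lemma normSq_wpow {c : ℝ} {w : ℂ} (hw : w ≠ 0) :
    Complex.normSq (wpow c w) = ‖w‖ ^ (2*c) := by
  rw [Complex.normSq_eq_norm_sq, abs_wpow hw, ← Real.rpow_natCast _ 2, ← Real.rpow_mul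
    (norm_nonneg w)]
  norm_num [mul_comm]

lemma quot_simp (n q N Q : ℂ) (hn : n ≠ 0) (hq : q ≠ 0) :
    (n * (-(q^2)⁻¹ * Q) + q⁻¹ * N) / (n * q⁻¹) = N * n⁻¹ - Q * q⁻¹ := by
  field_simp; ring

lemma cancel_right (x y t : ℂ) (hx : x ≠ 0) (hy : y ≠ 0) :
    (y * t) * (x * y)⁻¹ = t * x⁻¹ := by field_simp

lemma cancel_left (x y t : ℂ) (hx : x ≠ 0) (hy : y ≠ 0) :
    (y * t) * (y * x)⁻¹ = t * x⁻¹ := by field_simp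

lemma cancel_3 (x y z t : ℂ) (hx : x ≠ 0) (hy : y ≠ 0) (hz : z ≠ 0) :
    (y * (x * t)) * (x * z * y)⁻¹ = t * z⁻¹ := by field_simp

/-! ### Main theorem -/

/-- On the slit punctured disc Ω the gauge transformation g has |g| = 1 and relates the
super-potentials φ and φ' by ∂_w log φ' = g·∂_w log φ and
∂_w̄ log φ' = ∂_w̄ log φ − (∂_w̄ g)/g. -/
theorem gauge_relates_superpotentials (c : ℝ) (hc : 0 < c) (ε : ℂ)
    (hε : ‖ε‖ = 1) :
    ∀ w ∈ Omega,
      ‖gauge17 c ε w‖ = 1 ∧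
      dzlog (phiC' c ε) w = gauge17 c ε w * dzlog (phiC c) w ∧
      dzbarlog (phiC' c ε) w =
        dzbarlog (phiC c) w - wdzbar (gauge17 c ε) w / gauge17 c ε w := by
  intro w hw
  have hu : DifferentiableAt ℂ (wpow c) w := differentiableAt_wpow hw
  obtain ⟨hw0abs, hw1, -⟩ := hw
  have hw0 : w ≠ 0 := by intro h; rw [h] at hw0abs; simp at hw0abs
  have hε0 : ε ≠ 0 := by intro h; rw [h] at hε; simp at hε
  have hεconj : conj ε = ε⁻¹ := by
    apply eq_inv_of_mul_eq_one_left
    rw [← Complex.normSq_eq_conj_mul_self, Complex.normSq_eq_norm_sq, hε]; norm_num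
  have huR : DifferentiableAt ℝ (wpow c) w := hu.restrictScalars ℝ
  have hvR : DifferentiableAt ℝ (fun z => conj (wpow c z)) w :=
    Complex.conjCLE.differentiableAt.comp w huR
  have habsA : ‖wpow c w‖ < 1 := by
    rw [abs_wpow hw0]; exact Real.rpow_lt_one (norm_nonneg w) hw1 hc
  have hne1 : ∀ z : ℂ, ‖z‖ < 1 → (1:ℂ) - z ≠ 0 := by
    intro z hz h
    have hz1 : z = 1 := by linear_combination -h
    rw [hz1] at hz; simp at hz
  have h1a : (1:ℂ) - wpow c w ≠ 0 := hne1 _ habsA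
  have h1b : (1:ℂ) - conj (wpow c w) ≠ 0 := hne1 _ (by rwa [Complex.norm_conj])
  have h1ea : (1:ℂ) - ε * wpow c w ≠ 0 := hne1 _ (by rw [norm_mul, hε, one_mul]; exact habsA)
  have h1eb : (1:ℂ) - conj ε * conj (wpow c w) ≠ 0 :=
    hne1 _ (by rw [norm_mul, Complex.norm_conj, Complex.norm_conj, hε, one_mul]; exact habsA)
  have h1eb' : (1:ℂ) - ε⁻¹ * conj (wpow c w) ≠ 0 := by rw [← hεconj]; exact h1eb
  have h1ab : (1:ℂ) - wpow c w * conj (wpow c w) ≠ 0 := by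
    apply hne1
    rw [norm_mul, Complex.norm_conj]
    nlinarith [norm_nonneg (wpow c w)]
  -- |g| = 1
  have hconj1 : (1:ℂ) - conj ε * conj (wpow c w) = conj (1 - ε * wpow c w) := by
    rw [map_sub, map_one, map_mul]
  have hconj2 : (1:ℂ) - conj (wpow c w) = conj (1 - wpow c w) := by rw [map_sub, map_one]
  have habsg : ‖gauge17 c ε w‖ = 1 := by
    rw [gauge17, hconj1, hconj2, norm_div, norm_mul, norm_mul, norm_mul, Complex.norm_conj,
      Complex.norm_conj, hε, one_mul]
    exact div_self (mul_ne_zero (norm_ne_zero_iff.mpr h1ea) (norm_ne_zero_iff.mpr h1a))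
  -- pointwise rational form of the superpotentials
  have keyP : ∀ z : ℂ, z ≠ 0 → cre (phiC c) z =
      (1 - wpow c z * conj (wpow c z)) * ((1 - wpow c z) * (1 - conj (wpow c z)))⁻¹ := by
    intro z hz
    simp only [cre, phiC]
    rw [← normSq_wpow hz]
    push_cast
    rw [← Complex.mul_conj, ← Complex.mul_conj, map_sub, map_one, div_eq_mul_inv]
  have keyP' : ∀ z : ℂ, z ≠ 0 → cre (phiC' c ε) z =
      (1 - wpow c z * conj (wpow c z)) *
        ((1 - ε * wpow c z) * (1 - conj ε * conj (wpow c z)))⁻¹ := by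
    intro z hz
    simp only [cre, phiC']
    rw [← normSq_wpow hz]
    push_cast
    rw [← Complex.mul_conj, ← Complex.mul_conj, map_sub, map_one, map_mul, div_eq_mul_inv]
  have EP : cre (phiC c) =ᶠ[nhds w]
      (fun z => (1 - wpow c z * conj (wpow c z)) *
        ((1 - wpow c z) * (1 - conj (wpow c z)))⁻¹) := by
    filter_upwards [compl_singleton_mem_nhds hw0] with z hz
    exact keyP z hz
  have EP' : cre (phiC' c ε) =ᶠ[nhds w]
      (fun z => (1 - wpow c z * conj (wpow c z)) *
        ((1 - ε * wpow c z) * (1 - conj ε * conj (wpow c z)))⁻¹) := by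
    filter_upwards [compl_singleton_mem_nhds hw0] with z hz
    exact keyP' z hz
  -- basic Wirtinger facts
  set d : ℂ := deriv (wpow c) w with hd_def
  have W1 : wdz (wpow c) w = d := wdz_holo hu
  have W2 : wdzbar (wpow c) w = 0 := wdzbar_holo hu
  have W3 : wdz (fun z => conj (wpow c z)) w = 0 := by rw [wdz_conj huR, W2, map_zero]
  have W4 : wdzbar (fun z => conj (wpow c z)) w = conj d := by rw [wdzbar_conj huR, W1]
  -- differentiability of the pieces
  have Dsu : DifferentiableAt ℝ (fun z => (1:ℂ) - wpow c z) w :=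
    (differentiableAt_const 1).sub huR
  have Dsv : DifferentiableAt ℝ (fun z => (1:ℂ) - conj (wpow c z)) w :=
    (differentiableAt_const 1).sub hvR
  have Dseu : DifferentiableAt ℝ (fun z => (1:ℂ) - ε * wpow c z) w :=
    (differentiableAt_const 1).sub (huR.const_mul ε)
  have Dsev : DifferentiableAt ℝ (fun z => (1:ℂ) - conj ε * conj (wpow c z)) w :=
    (differentiableAt_const 1).sub (hvR.const_mul (conj ε))
  have Dn : DifferentiableAt ℝ (fun z => (1:ℂ) - wpow c z * conj (wpow c z)) w :=
    (differentiableAt_const 1).sub (huR.mul hvR)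
  have Dq : DifferentiableAt ℝ (fun z => ((1:ℂ) - wpow c z) * (1 - conj (wpow c z))) w :=
    Dsu.mul Dsv
  have Dq' : DifferentiableAt ℝ
      (fun z => ((1:ℂ) - ε * wpow c z) * (1 - conj ε * conj (wpow c z))) w := Dseu.mul Dsev
  have DD : DifferentiableAt ℝ (fun z => ((1:ℂ) - ε * wpow c z) * (1 - conj (wpow c z))) w :=
    Dseu.mul Dsv
  have DM : DifferentiableAt ℝ
      (fun z => ε * (1 - conj ε * conj (wpow c z)) * (1 - wpow c z)) w :=
    (Dsev.const_mul ε).mul Dsu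
  have hqw : ((1:ℂ) - wpow c w) * (1 - conj (wpow c w)) ≠ 0 := mul_ne_zero h1a h1b
  have hq'w : ((1:ℂ) - ε * wpow c w) * (1 - conj ε * conj (wpow c w)) ≠ 0 :=
    mul_ne_zero h1ea h1eb
  have hDw : ((1:ℂ) - ε * wpow c w) * (1 - conj (wpow c w)) ≠ 0 := mul_ne_zero h1ea h1b
  -- Wirtinger derivatives of the pieces
  have Wsu : wdz (fun z => (1:ℂ) - wpow c z) w = -d := by
    have h : wdz (fun z => (1:ℂ) - wpow c z) w = - wdz (wpow c) w := wdz_const_sub huR 1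
    rw [h, W1]
  have Bsu : wdzbar (fun z => (1:ℂ) - wpow c z) w = 0 := by
    have h : wdzbar (fun z => (1:ℂ) - wpow c z) w = - wdzbar (wpow c) w := wdzbar_const_sub huR 1
    rw [h, W2, neg_zero]
  have Wsv : wdz (fun z => (1:ℂ) - conj (wpow c z)) w = 0 := by
    have h : wdz (fun z => (1:ℂ) - conj (wpow c z)) w =
        - wdz (fun z => conj (wpow c z)) w := wdz_const_sub hvR 1
    rw [h, W3, neg_zero]
  have Bsv : wdzbar (fun z => (1:ℂ) - conj (wpow c z)) w = -conj d := by
    have h : wdzbar (fun z => (1:ℂ) - conj (wpow c z)) w =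
        - wdzbar (fun z => conj (wpow c z)) w := wdzbar_const_sub hvR 1
    rw [h, W4]
  have Wseu : wdz (fun z => (1:ℂ) - ε * wpow c z) w = -(ε * d) := by
    have h : wdz (fun z => (1:ℂ) - ε * wpow c z) w =
        - wdz (fun z => ε * wpow c z) w := wdz_const_sub (huR.const_mul ε) 1
    have h2 : wdz (fun z => ε * wpow c z) w =
        ε * wdz (wpow c) w + wpow c w * wdz (fun _ => ε) w :=
      wdz_mul (differentiableAt_const ε) huR
    rw [h, h2, W1, wdz_const]; ring
  have Bseu : wdzbar (fun z => (1:ℂ) - ε * wpow c z) w = 0 := by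
    have h : wdzbar (fun z => (1:ℂ) - ε * wpow c z) w =
        - wdzbar (fun z => ε * wpow c z) w := wdzbar_const_sub (huR.const_mul ε) 1
    have h2 : wdzbar (fun z => ε * wpow c z) w =
        ε * wdzbar (wpow c) w + wpow c w * wdzbar (fun _ => ε) w :=
      wdzbar_mul (differentiableAt_const ε) huR
    rw [h, h2, W2, wdzbar_const]; ring
  have Wsev : wdz (fun z => (1:ℂ) - conj ε * conj (wpow c z)) w = 0 := by
    have h : wdz (fun z => (1:ℂ) - conj ε * conj (wpow c z)) w =
        - wdz (fun z => conj ε * conj (wpow c z)) w := wdz_const_sub (hvR.const_mul (conj ε)) 1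
    have h2 : wdz (fun z => conj ε * conj (wpow c z)) w =
        conj ε * wdz (fun z => conj (wpow c z)) w +
          conj (wpow c w) * wdz (fun _ => conj ε) w :=
      wdz_mul (differentiableAt_const (conj ε)) hvR
    rw [h, h2, W3, wdz_const]; ring
  have Bsev : wdzbar (fun z => (1:ℂ) - conj ε * conj (wpow c z)) w = -(conj ε * conj d) := by
    have h : wdzbar (fun z => (1:ℂ) - conj ε * conj (wpow c z)) w =
        - wdzbar (fun z => conj ε * conj (wpow c z)) w :=
      wdzbar_const_sub (hvR.const_mul (conj ε)) 1
    have h2 : wdzbar (fun z => conj ε * conj (wpow c z)) w =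
        conj ε * wdzbar (fun z => conj (wpow c z)) w +
          conj (wpow c w) * wdzbar (fun _ => conj ε) w :=
      wdzbar_mul (differentiableAt_const (conj ε)) hvR
    rw [h, h2, W4, wdzbar_const]; ring
  have Wn : wdz (fun z => (1:ℂ) - wpow c z * conj (wpow c z)) w = -(conj (wpow c w) * d) := by
    have h : wdz (fun z => (1:ℂ) - wpow c z * conj (wpow c z)) w =
        - wdz (fun z => wpow c z * conj (wpow c z)) w := wdz_const_sub (huR.mul hvR) 1
    have h2 : wdz (fun z => wpow c z * conj (wpow c z)) w =
        wpow c w * wdz (fun z => conj (wpow c z)) w + conj (wpow c w) * wdz (wpow c) w :=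
      wdz_mul huR hvR
    rw [h, h2, W1, W3]; ring
  have Bn : wdzbar (fun z => (1:ℂ) - wpow c z * conj (wpow c z)) w =
      -(wpow c w * conj d) := by
    have h : wdzbar (fun z => (1:ℂ) - wpow c z * conj (wpow c z)) w =
        - wdzbar (fun z => wpow c z * conj (wpow c z)) w := wdzbar_const_sub (huR.mul hvR) 1
    have h2 : wdzbar (fun z => wpow c z * conj (wpow c z)) w =
        wpow c w * wdzbar (fun z => conj (wpow c z)) w +
          conj (wpow c w) * wdzbar (wpow c) w :=
      wdzbar_mul huR hvR
    rw [h, h2, W2, W4]; ring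
  -- products
  have Wq : wdz (fun z => ((1:ℂ) - wpow c z) * (1 - conj (wpow c z))) w =
      (1 - conj (wpow c w)) * -d := by
    have h : wdz (fun z => ((1:ℂ) - wpow c z) * (1 - conj (wpow c z))) w =
        ((1:ℂ) - wpow c w) * wdz (fun z => (1:ℂ) - conj (wpow c z)) w +
          ((1:ℂ) - conj (wpow c w)) * wdz (fun z => (1:ℂ) - wpow c z) w := wdz_mul Dsu Dsv
    rw [h, Wsu, Wsv]; ring
  have Bq : wdzbar (fun z => ((1:ℂ) - wpow c z) * (1 - conj (wpow c z))) w =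
      (1 - wpow c w) * -conj d := by
    have h : wdzbar (fun z => ((1:ℂ) - wpow c z) * (1 - conj (wpow c z))) w =
        ((1:ℂ) - wpow c w) * wdzbar (fun z => (1:ℂ) - conj (wpow c z)) w +
          ((1:ℂ) - conj (wpow c w)) * wdzbar (fun z => (1:ℂ) - wpow c z) w := wdzbar_mul Dsu Dsv
    rw [h, Bsu, Bsv]; ring
  have Wq' : wdz (fun z => ((1:ℂ) - ε * wpow c z) * (1 - conj ε * conj (wpow c z))) w =
      (1 - conj ε * conj (wpow c w)) * -(ε * d) := by
    have h : wdz (fun z => ((1:ℂ) - ε * wpow c z) * (1 - conj ε * conj (wpow c z))) w =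
        ((1:ℂ) - ε * wpow c w) * wdz (fun z => (1:ℂ) - conj ε * conj (wpow c z)) w +
          ((1:ℂ) - conj ε * conj (wpow c w)) * wdz (fun z => (1:ℂ) - ε * wpow c z) w :=
      wdz_mul Dseu Dsev
    rw [h, Wseu, Wsev]; ring
  have Bq' : wdzbar (fun z => ((1:ℂ) - ε * wpow c z) * (1 - conj ε * conj (wpow c z))) w =
      (1 - ε * wpow c w) * -(conj ε * conj d) := by
    have h : wdzbar (fun z => ((1:ℂ) - ε * wpow c z) * (1 - conj ε * conj (wpow c z))) w =
        ((1:ℂ) - ε * wpow c w) * wdzbar (fun z => (1:ℂ) - conj ε * conj (wpow c z)) w +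
          ((1:ℂ) - conj ε * conj (wpow c w)) * wdzbar (fun z => (1:ℂ) - ε * wpow c z) w :=
      wdzbar_mul Dseu Dsev
    rw [h, Bsev, Bseu]; ring
  have BD : wdzbar (fun z => ((1:ℂ) - ε * wpow c z) * (1 - conj (wpow c z))) w =
      (1 - ε * wpow c w) * -conj d := by
    have h : wdzbar (fun z => ((1:ℂ) - ε * wpow c z) * (1 - conj (wpow c z))) w =
        ((1:ℂ) - ε * wpow c w) * wdzbar (fun z => (1:ℂ) - conj (wpow c z)) w +
          ((1:ℂ) - conj (wpow c w)) * wdzbar (fun z => (1:ℂ) - ε * wpow c z) w :=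
      wdzbar_mul Dseu Dsv
    rw [h, Bsv, Bseu]; ring
  have BM : wdzbar (fun z => ε * (1 - conj ε * conj (wpow c z)) * (1 - wpow c z)) w =
      (1 - wpow c w) * (ε * -(conj ε * conj d)) := by
    have h : wdzbar (fun z => ε * (1 - conj ε * conj (wpow c z)) * (1 - wpow c z)) w =
        (ε * ((1:ℂ) - conj ε * conj (wpow c w))) * wdzbar (fun z => (1:ℂ) - wpow c z) w +
          ((1:ℂ) - wpow c w) *
            wdzbar (fun z => ε * ((1:ℂ) - conj ε * conj (wpow c z))) w :=
      wdzbar_mul (Dsev.const_mul ε) Dsu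
    have h2 : wdzbar (fun z => ε * ((1:ℂ) - conj ε * conj (wpow c z))) w =
        ε * wdzbar (fun z => (1:ℂ) - conj ε * conj (wpow c z)) w +
          ((1:ℂ) - conj ε * conj (wpow c w)) * wdzbar (fun _ => ε) w :=
      wdzbar_mul (differentiableAt_const ε) Dsev
    rw [h, h2, Bsu, Bsev, wdzbar_const]; ring
  -- the full rational functions
  have WP : wdz (fun z => (1 - wpow c z * conj (wpow c z)) *
      (((1:ℂ) - wpow c z) * (1 - conj (wpow c z)))⁻¹) w =
      (1 - wpow c w * conj (wpow c w)) *
        (-((((1:ℂ) - wpow c w) * (1 - conj (wpow c w)))^2)⁻¹ *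
          ((1 - conj (wpow c w)) * -d)) +
        (((1:ℂ) - wpow c w) * (1 - conj (wpow c w)))⁻¹ * -(conj (wpow c w) * d) := by
    have h : wdz (fun z => (1 - wpow c z * conj (wpow c z)) *
        (((1:ℂ) - wpow c z) * (1 - conj (wpow c z)))⁻¹) w =
        ((1:ℂ) - wpow c w * conj (wpow c w)) *
          wdz (fun z => (((1:ℂ) - wpow c z) * (1 - conj (wpow c z)))⁻¹) w +
        ((((1:ℂ) - wpow c w) * (1 - conj (wpow c w)))⁻¹) *
          wdz (fun z => (1:ℂ) - wpow c z * conj (wpow c z)) w :=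
      wdz_mul Dn (Dq.inv hqw)
    have hinv : wdz (fun z => (((1:ℂ) - wpow c z) * (1 - conj (wpow c z)))⁻¹) w =
        -((((1:ℂ) - wpow c w) * (1 - conj (wpow c w)))^2)⁻¹ *
          wdz (fun z => ((1:ℂ) - wpow c z) * (1 - conj (wpow c z))) w := wdz_inv Dq hqw
    rw [h, hinv, Wq, Wn]
  have BP : wdzbar (fun z => (1 - wpow c z * conj (wpow c z)) *
      (((1:ℂ) - wpow c z) * (1 - conj (wpow c z)))⁻¹) w =
      (1 - wpow c w * conj (wpow c w)) *
        (-((((1:ℂ) - wpow c w) * (1 - conj (wpow c w)))^2)⁻¹ *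
          ((1 - wpow c w) * -conj d)) +
        (((1:ℂ) - wpow c w) * (1 - conj (wpow c w)))⁻¹ * -(wpow c w * conj d) := by
    have h : wdzbar (fun z => (1 - wpow c z * conj (wpow c z)) *
        (((1:ℂ) - wpow c z) * (1 - conj (wpow c z)))⁻¹) w =
        ((1:ℂ) - wpow c w * conj (wpow c w)) *
          wdzbar (fun z => (((1:ℂ) - wpow c z) * (1 - conj (wpow c z)))⁻¹) w +
        ((((1:ℂ) - wpow c w) * (1 - conj (wpow c w)))⁻¹) *
          wdzbar (fun z => (1:ℂ) - wpow c z * conj (wpow c z)) w :=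
      wdzbar_mul Dn (Dq.inv hqw)
    have hinv : wdzbar (fun z => (((1:ℂ) - wpow c z) * (1 - conj (wpow c z)))⁻¹) w =
        -((((1:ℂ) - wpow c w) * (1 - conj (wpow c w)))^2)⁻¹ *
          wdzbar (fun z => ((1:ℂ) - wpow c z) * (1 - conj (wpow c z))) w := wdzbar_inv Dq hqw
    rw [h, hinv, Bq, Bn]
  have WP' : wdz (fun z => (1 - wpow c z * conj (wpow c z)) *
      (((1:ℂ) - ε * wpow c z) * (1 - conj ε * conj (wpow c z)))⁻¹) w =
      (1 - wpow c w * conj (wpow c w)) *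
        (-((((1:ℂ) - ε * wpow c w) * (1 - conj ε * conj (wpow c w)))^2)⁻¹ *
          ((1 - conj ε * conj (wpow c w)) * -(ε * d))) +
        (((1:ℂ) - ε * wpow c w) * (1 - conj ε * conj (wpow c w)))⁻¹ *
          -(conj (wpow c w) * d) := by
    have h : wdz (fun z => (1 - wpow c z * conj (wpow c z)) *
        (((1:ℂ) - ε * wpow c z) * (1 - conj ε * conj (wpow c z)))⁻¹) w =
        ((1:ℂ) - wpow c w * conj (wpow c w)) *
          wdz (fun z => (((1:ℂ) - ε * wpow c z) * (1 - conj ε * conj (wpow c z)))⁻¹) w +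
        ((((1:ℂ) - ε * wpow c w) * (1 - conj ε * conj (wpow c w)))⁻¹) *
          wdz (fun z => (1:ℂ) - wpow c z * conj (wpow c z)) w :=
      wdz_mul Dn (Dq'.inv hq'w)
    have hinv : wdz (fun z => (((1:ℂ) - ε * wpow c z) * (1 - conj ε * conj (wpow c z)))⁻¹) w =
        -((((1:ℂ) - ε * wpow c w) * (1 - conj ε * conj (wpow c w)))^2)⁻¹ *
          wdz (fun z => ((1:ℂ) - ε * wpow c z) * (1 - conj ε * conj (wpow c z))) w :=
      wdz_inv Dq' hq'w
    rw [h, hinv, Wq', Wn]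
  have BP' : wdzbar (fun z => (1 - wpow c z * conj (wpow c z)) *
      (((1:ℂ) - ε * wpow c z) * (1 - conj ε * conj (wpow c z)))⁻¹) w =
      (1 - wpow c w * conj (wpow c w)) *
        (-((((1:ℂ) - ε * wpow c w) * (1 - conj ε * conj (wpow c w)))^2)⁻¹ *
          ((1 - ε * wpow c w) * -(conj ε * conj d))) +
        (((1:ℂ) - ε * wpow c w) * (1 - conj ε * conj (wpow c w)))⁻¹ *
          -(wpow c w * conj d) := by
    have h : wdzbar (fun z => (1 - wpow c z * conj (wpow c z)) *
        (((1:ℂ) - ε * wpow c z) * (1 - conj ε * conj (wpow c z)))⁻¹) w =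
        ((1:ℂ) - wpow c w * conj (wpow c w)) *
          wdzbar (fun z => (((1:ℂ) - ε * wpow c z) * (1 - conj ε * conj (wpow c z)))⁻¹) w +
        ((((1:ℂ) - ε * wpow c w) * (1 - conj ε * conj (wpow c w)))⁻¹) *
          wdzbar (fun z => (1:ℂ) - wpow c z * conj (wpow c z)) w :=
      wdzbar_mul Dn (Dq'.inv hq'w)
    have hinv : wdzbar
        (fun z => (((1:ℂ) - ε * wpow c z) * (1 - conj ε * conj (wpow c z)))⁻¹) w =
        -((((1:ℂ) - ε * wpow c w) * (1 - conj ε * conj (wpow c w)))^2)⁻¹ *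
          wdzbar (fun z => ((1:ℂ) - ε * wpow c z) * (1 - conj ε * conj (wpow c z))) w :=
      wdzbar_inv Dq' hq'w
    rw [h, hinv, Bq', Bn]
  have BG : wdzbar (fun z => (ε * (1 - conj ε * conj (wpow c z)) * (1 - wpow c z)) *
      (((1:ℂ) - ε * wpow c z) * (1 - conj (wpow c z)))⁻¹) w =
      (ε * (1 - conj ε * conj (wpow c w)) * (1 - wpow c w)) *
        (-((((1:ℂ) - ε * wpow c w) * (1 - conj (wpow c w)))^2)⁻¹ *
          ((1 - ε * wpow c w) * -conj d)) +
        (((1:ℂ) - ε * wpow c w) * (1 - conj (wpow c w)))⁻¹ *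
          ((1 - wpow c w) * (ε * -(conj ε * conj d))) := by
    have h : wdzbar (fun z => (ε * (1 - conj ε * conj (wpow c z)) * (1 - wpow c z)) *
        (((1:ℂ) - ε * wpow c z) * (1 - conj (wpow c z)))⁻¹) w =
        (ε * ((1:ℂ) - conj ε * conj (wpow c w)) * (1 - wpow c w)) *
          wdzbar (fun z => (((1:ℂ) - ε * wpow c z) * (1 - conj (wpow c z)))⁻¹) w +
        ((((1:ℂ) - ε * wpow c w) * (1 - conj (wpow c w)))⁻¹) *
          wdzbar (fun z => ε * ((1:ℂ) - conj ε * conj (wpow c z)) * (1 - wpow c z)) w :=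
      wdzbar_mul DM (DD.inv hDw)
    have hinv : wdzbar (fun z => (((1:ℂ) - ε * wpow c z) * (1 - conj (wpow c z)))⁻¹) w =
        -((((1:ℂ) - ε * wpow c w) * (1 - conj (wpow c w)))^2)⁻¹ *
          wdzbar (fun z => ((1:ℂ) - ε * wpow c z) * (1 - conj (wpow c z))) w :=
      wdzbar_inv DD hDw
    rw [h, hinv, BD, BM]
  -- values of the superpotentials
  have hvalP : ((phiC c w : ℝ) : ℂ) =
      (1 - wpow c w * conj (wpow c w)) *
        ((1 - wpow c w) * (1 - conj (wpow c w)))⁻¹ := keyP w hw0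
  have hvalP' : ((phiC' c ε w : ℝ) : ℂ) =
      (1 - wpow c w * conj (wpow c w)) *
        ((1 - ε * wpow c w) * (1 - conj ε * conj (wpow c w)))⁻¹ := keyP' w hw0
  have hgfun : gauge17 c ε = fun z =>
      (ε * (1 - conj ε * conj (wpow c z)) * (1 - wpow c z)) *
        (((1:ℂ) - ε * wpow c z) * (1 - conj (wpow c z)))⁻¹ := by
    funext z; rw [gauge17, div_eq_mul_inv]
  have hgw : gauge17 c ε w =
      (ε * (1 - conj ε * conj (wpow c w)) * (1 - wpow c w)) *
        (((1:ℂ) - ε * wpow c w) * (1 - conj (wpow c w)))⁻¹ := by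
    rw [gauge17, div_eq_mul_inv]
  have hM0 : ε * ((1:ℂ) - conj ε * conj (wpow c w)) * (1 - wpow c w) ≠ 0 :=
    mul_ne_zero (mul_ne_zero hε0 h1eb) h1a
  have hεmul : ε * ((1:ℂ) - conj ε * conj (wpow c w)) = ε - conj (wpow c w) := by
    rw [hεconj]; field_simp
  have hg_simp : gauge17 c ε w =
      (ε - conj (wpow c w)) * ((1:ℂ) - wpow c w) *
        (((1:ℂ) - ε * wpow c w) * (1 - conj (wpow c w)))⁻¹ := by
    rw [hgw, hεmul]
  -- simplified log-derivatives
  have hlogφ : dzlog (phiC c) w =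
      -(conj (wpow c w) * d) * ((1:ℂ) - wpow c w * conj (wpow c w))⁻¹ -
        -d * ((1:ℂ) - wpow c w)⁻¹ := by
    simp only [dzlog]
    rw [wdz_congr EP, hvalP, WP, quot_simp _ _ _ _ h1ab hqw, cancel_right _ _ _ h1a h1b]
  have hlogφ' : dzlog (phiC' c ε) w =
      -(conj (wpow c w) * d) * ((1:ℂ) - wpow c w * conj (wpow c w))⁻¹ -
        -(ε * d) * ((1:ℂ) - ε * wpow c w)⁻¹ := by
    simp only [dzlog]
    rw [wdz_congr EP', hvalP', WP', quot_simp _ _ _ _ h1ab hq'w, cancel_right _ _ _ h1ea h1eb]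
  have hbφ : dzbarlog (phiC c) w =
      -(wpow c w * conj d) * ((1:ℂ) - wpow c w * conj (wpow c w))⁻¹ -
        -conj d * ((1:ℂ) - conj (wpow c w))⁻¹ := by
    simp only [dzbarlog]
    rw [wdzbar_congr EP, hvalP, BP, quot_simp _ _ _ _ h1ab hqw, cancel_left _ _ _ h1b h1a]
  have hbφ' : dzbarlog (phiC' c ε) w =
      -(wpow c w * conj d) * ((1:ℂ) - wpow c w * conj (wpow c w))⁻¹ -
        -(conj ε * conj d) * ((1:ℂ) - conj ε * conj (wpow c w))⁻¹ := by
    simp only [dzbarlog]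
    rw [wdzbar_congr EP', hvalP', BP', quot_simp _ _ _ _ h1ab hq'w, cancel_left _ _ _ h1eb h1ea]
  have hBGquot : wdzbar (gauge17 c ε) w / gauge17 c ε w =
      -(conj ε * conj d) * ((1:ℂ) - conj ε * conj (wpow c w))⁻¹ -
        -conj d * ((1:ℂ) - conj (wpow c w))⁻¹ := by
    have hwb : wdzbar (gauge17 c ε) w = wdzbar (fun z =>
        (ε * (1 - conj ε * conj (wpow c z)) * (1 - wpow c z)) *
          (((1:ℂ) - ε * wpow c z) * (1 - conj (wpow c z)))⁻¹) w := by rw [hgfun]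
    rw [hwb, BG, hgw, quot_simp _ _ _ _ hM0 hDw, cancel_3 _ _ _ _ hε0 h1a h1eb,
      cancel_left _ _ _ h1b h1ea]
  refine ⟨habsg, ?_, ?_⟩
  · rw [hlogφ', hlogφ, hg_simp]
    have h1ab' : (1:ℂ) - conj (wpow c w) * wpow c w ≠ 0 := by rw [mul_comm]; exact h1ab
    have h1ea' : (1:ℂ) - wpow c w * ε ≠ 0 := by rw [mul_comm]; exact h1ea
    field_simp
    ring
  · rw [hbφ', hbφ, hBGquot]
    ring
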